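/- For any error-free training distribution p (i.e. p(V) = 1) and any base model p̂, the generative error rate satisfies err ≥ 2·erriv − (max_c |V_c|)/(min_c |E_c|) − δ. -/

import Mathlib

open Finset

open scoped Classical

/-- (Theorem 1 of the paper, with prompts.)
Prompts `c : C` are drawn from `μ`; for each prompt the plausible responses `Rset c`
are partitioned into nonempty valid responses `Vset c` and erroneous responses `Eset c`.
`p(·|c)` is an error-free training conditional distribution and `phat(·|c)` an arbitrary
base model.  Then `err ≥ 2·erriv − (max_c |V_c|)/(min_c |E_c|) − δ`. -/
theorem stmt0 {C R : Type} [Fintype C] [Nonempty C] [Fintype R]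
    (μ : C → ℝ) (hμ0 : ∀ c, 0 ≤ μ c) (hμ1 : ∑ c, μ c = 1)
    (Rset Vset Eset : C → Finset R)
    (hVne : ∀ c, (Vset c).Nonempty) (hEne : ∀ c, (Eset c).Nonempty)
    (hdisj : ∀ c, Disjoint (Vset c) (Eset c))
    (hpart : ∀ c, Vset c ∪ Eset c = Rset c)
    (p phat : C → R → ℝ)
    (hp0 : ∀ c r, 0 ≤ p c r) (hp1 : ∀ c, ∑ r ∈ Rset c, p c r = 1)
    (hpsupp : ∀ c, ∀ r ∉ Rset c, p c r = 0)
    (hphat0 : ∀ c r, 0 ≤ phat c r) (hphat1 : ∀ c, ∑ r ∈ Rset c, phat c r = 1)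
    (hphatsupp : ∀ c, ∀ r ∉ Rset c, phat c r = 0)
    -- error-free training distribution: p(E_c | c) = 0 for every prompt c
    (herrfree : ∀ c, ∑ r ∈ Eset c, p c r = 0) :
    -- min_c |E_c| and max_c |V_c|
    let minE : ℕ := Finset.univ.inf' Finset.univ_nonempty (fun c => (Eset c).card)
    let maxV : ℕ := Finset.univ.sup' Finset.univ_nonempty (fun c => (Vset c).card)
    -- the mixture distribution D : with prob 1/2 draw (c,r) ∼ p, with prob 1/2
    -- draw c ∼ μ and r uniformly from E_c
    let D : C → R → ℝ := fun c r => μ c * p c r / 2 +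
      (if r ∈ Eset c then μ c / (2 * ((Eset c).card : ℝ)) else 0)
    -- generative error rate err = phat(E)
    let err : ℝ := ∑ c, μ c * ∑ r ∈ Eset c, phat c r
    -- misclassification rate of the classifier `f̂(c,r) = + iff phat(r|c) > 1/min_c |E_c|`
    let erriv : ℝ := ∑ c, ∑ r ∈ Rset c,
      if (r ∈ Vset c ∧ ¬ (phat c r > 1 / (minE : ℝ))) ∨
         (r ∈ Eset c ∧ phat c r > 1 / (minE : ℝ)) then D c r else 0
    -- calibration gap δ = |phat(A) − p(A)| for the above-threshold set A
    let δ : ℝ := |∑ c, ∑ r ∈ Rset c,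
      if phat c r > 1 / (minE : ℝ) then μ c * (phat c r - p c r) else 0|
    err ≥ 2 * erriv - (maxV : ℝ) / (minE : ℝ) - δ := by
  intro minE maxV D err erriv δ
  have hminE1 : 1 ≤ minE := by
    apply Finset.le_inf'
    intro c _
    exact (hEne c).card_pos
  have hminEposR : (0:ℝ) < (minE : ℝ) := by exact_mod_cast hminE1
  have hminEle : ∀ c, (minE : ℝ) ≤ ((Eset c).card : ℝ) := by
    intro c; exact_mod_cast Finset.inf'_le _ (Finset.mem_univ c)
  have hmaxVle : ∀ c, ((Vset c).card : ℝ) ≤ (maxV : ℝ) := by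
    intro c; exact_mod_cast Finset.le_sup' (fun c => (Vset c).card) (Finset.mem_univ c)
  set t : ℝ := 1 / (minE : ℝ) with ht
  have ht0 : 0 ≤ t := le_of_lt (by positivity)
  -- abbreviations
  set L : C → ℝ := fun c => ∑ r ∈ Rset c,
      if (r ∈ Vset c ∧ ¬ (phat c r > t)) ∨ (r ∈ Eset c ∧ phat c r > t)
      then (p c r + (if r ∈ Eset c then (((Eset c).card : ℝ))⁻¹ else 0)) else 0 with hL
  set G : C → ℝ := fun c => ∑ r ∈ Rset c,
      if phat c r > t then (phat c r - p c r) else 0 with hG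
  -- key pointwise (per-prompt) inequality
  have key : ∀ c, L c ≤ (∑ r ∈ Eset c, phat c r) + (maxV : ℝ) / (minE : ℝ) + G c := by
    intro c
    have hecard : (0:ℝ) < ((Eset c).card : ℝ) := by exact_mod_cast (hEne c).card_pos
    have hpE : ∀ r ∈ Eset c, p c r = 0 := by
      intro r hr
      exact (Finset.sum_eq_zero_iff_of_nonneg (fun r _ => hp0 c r)).1 (herrfree c) r hr
    have hVnotE : ∀ {r}, r ∈ Vset c → r ∉ Eset c := fun hr =>
      Finset.disjoint_left.1 (hdisj c) hr
    have hEnotV : ∀ {r}, r ∈ Eset c → r ∉ Vset c := fun hr =>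
      Finset.disjoint_right.1 (hdisj c) hr
    have hsplit : ∀ (f : R → ℝ),
        ∑ r ∈ Rset c, f r = ∑ r ∈ Vset c, f r + ∑ r ∈ Eset c, f r := by
      intro f; rw [← hpart c, Finset.sum_union (hdisj c)]
    -- p sums
    have hpV : ∑ r ∈ Vset c, p c r = 1 := by
      have := hp1 c
      rw [hsplit (p c), herrfree c, add_zero] at this
      exact this
    -- L c computation
    have hLc : L c = (∑ r ∈ (Vset c).filter (fun r => ¬ phat c r > t), p c r)
        + (((Eset c).filter (fun r => phat c r > t)).card : ℝ) * (((Eset c).card : ℝ))⁻¹ := by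
      rw [hL]
      simp only
      rw [hsplit]
      congr 1
      · rw [Finset.sum_filter]
        apply Finset.sum_congr rfl
        intro r hr
        have h1 : r ∉ Eset c := hVnotE hr
        by_cases hA : phat c r > t <;> simp [hr, h1, hA]
      · have h2 : (∑ r ∈ Eset c,
            if (r ∈ Vset c ∧ ¬ phat c r > t) ∨ (r ∈ Eset c ∧ phat c r > t)
            then (p c r + (if r ∈ Eset c then (((Eset c).card : ℝ))⁻¹ else 0)) else 0)
            = ∑ _r ∈ (Eset c).filter (fun r => phat c r > t), (((Eset c).card : ℝ))⁻¹ := by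
          rw [Finset.sum_filter]
          apply Finset.sum_congr rfl
          intro r hr
          have h1 : r ∉ Vset c := hEnotV hr
          by_cases hA : phat c r > t <;> simp [hr, h1, hA, hpE r hr]
        rw [h2, Finset.sum_const, nsmul_eq_mul]
    -- G c computation
    have hGc : G c = (∑ r ∈ (Vset c).filter (fun r => phat c r > t), (phat c r - p c r))
        + ∑ r ∈ (Eset c).filter (fun r => phat c r > t), phat c r := by
      rw [hG]
      simp only
      rw [hsplit (fun r => if phat c r > t then (phat c r - p c r) else 0),
        Finset.sum_filter, Finset.sum_filter]
      congr 1
      apply Finset.sum_congr rfl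
      intro r hr
      by_cases hA : phat c r > t <;> simp [hA, hpE r hr]
    -- bound the erroneous-above-threshold part
    have hEA : (((Eset c).filter (fun r => phat c r > t)).card : ℝ) * (((Eset c).card : ℝ))⁻¹
        ≤ ∑ r ∈ (Eset c).filter (fun r => phat c r > t), phat c r := by
      have h1 : ∀ r ∈ (Eset c).filter (fun r => phat c r > t),
          ((Eset c).card : ℝ)⁻¹ ≤ phat c r := by
        intro r hr
        have hA : phat c r > t := (Finset.mem_filter.1 hr).2
        have : ((Eset c).card : ℝ)⁻¹ ≤ t := by
          rw [ht, one_div]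
          exact inv_anti₀ hminEposR (hminEle c)
        linarith
      calc (((Eset c).filter (fun r => phat c r > t)).card : ℝ) * (((Eset c).card : ℝ))⁻¹
          = ∑ _r ∈ (Eset c).filter (fun r => phat c r > t), ((Eset c).card : ℝ)⁻¹ := by
            rw [Finset.sum_const, nsmul_eq_mul]
        _ ≤ _ := Finset.sum_le_sum h1
    -- bound the valid-below-threshold phat mass
    have hVb : ∑ r ∈ (Vset c).filter (fun r => ¬ phat c r > t), phat c r
        ≤ (maxV : ℝ) / (minE : ℝ) := by
      calc ∑ r ∈ (Vset c).filter (fun r => ¬ phat c r > t), phat c r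
          ≤ ∑ _r ∈ (Vset c).filter (fun r => ¬ phat c r > t), t := by
            apply Finset.sum_le_sum
            intro r hr
            exact le_of_not_gt (Finset.mem_filter.1 hr).2
        _ = (((Vset c).filter (fun r => ¬ phat c r > t)).card : ℝ) * t := by
            rw [Finset.sum_const, nsmul_eq_mul]
        _ ≤ ((Vset c).card : ℝ) * t := by
            apply mul_le_mul_of_nonneg_right _ ht0
            exact_mod_cast Finset.card_filter_le _ _
        _ ≤ (maxV : ℝ) * t := mul_le_mul_of_nonneg_right (hmaxVle c) ht0
        _ = (maxV : ℝ) / (minE : ℝ) := by rw [ht]; ring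
    -- split phat over V into above/below threshold
    have hVsplit : ∑ r ∈ (Vset c).filter (fun r => phat c r > t), phat c r
        + ∑ r ∈ (Vset c).filter (fun r => ¬ phat c r > t), phat c r
        = ∑ r ∈ Vset c, phat c r := Finset.sum_filter_add_sum_filter_not _ _ _
    -- split p over V into above/below threshold
    have hpsplit : ∑ r ∈ (Vset c).filter (fun r => phat c r > t), p c r
        + ∑ r ∈ (Vset c).filter (fun r => ¬ phat c r > t), p c r
        = 1 := by rw [Finset.sum_filter_add_sum_filter_not, hpV]
    -- total phat mass
    have hphatR : ∑ r ∈ Vset c, phat c r + ∑ r ∈ Eset c, phat c r = 1 := by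
      rw [← hsplit (phat c), hphat1 c]
    have hVAsub : ∑ r ∈ (Vset c).filter (fun r => phat c r > t), (phat c r - p c r)
        = ∑ r ∈ (Vset c).filter (fun r => phat c r > t), phat c r
          - ∑ r ∈ (Vset c).filter (fun r => phat c r > t), p c r :=
      Finset.sum_sub_distrib _ _
    rw [hLc, hGc]
    linarith
  -- relate erriv to L
  have herriv2 : 2 * erriv = ∑ c, μ c * L c := by
    have : erriv = ∑ c, ∑ r ∈ Rset c,
        if (r ∈ Vset c ∧ ¬ (phat c r > t)) ∨ (r ∈ Eset c ∧ phat c r > t)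
        then D c r else 0 := rfl
    rw [this, Finset.mul_sum]
    apply Finset.sum_congr rfl
    intro c _
    have hecard : ((Eset c).card : ℝ) ≠ 0 := by
      have : (0:ℝ) < ((Eset c).card : ℝ) := by exact_mod_cast (hEne c).card_pos
      linarith
    rw [hL]
    simp only
    rw [Finset.mul_sum, Finset.mul_sum]
    apply Finset.sum_congr rfl
    intro r _
    have hDval : D c r = μ c * p c r / 2 +
        (if r ∈ Eset c then μ c / (2 * ((Eset c).card : ℝ)) else 0) := rfl
    rw [hDval]
    by_cases hmis : (r ∈ Vset c ∧ ¬ (phat c r > t)) ∨ (r ∈ Eset c ∧ phat c r > t)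
    · rw [if_pos hmis, if_pos hmis]
      by_cases hE : r ∈ Eset c
      · rw [if_pos hE, if_pos hE]
        rw [div_eq_mul_inv, div_eq_mul_inv, mul_inv]
        ring
      · rw [if_neg hE, if_neg hE]
        ring
    · rw [if_neg hmis, if_neg hmis]
      ring
  -- relate δ to G
  have hδG : ∑ c, μ c * G c ≤ δ := by
    have hδeq : δ = |∑ c, μ c * G c| := by
      have : (∑ c, ∑ r ∈ Rset c,
          if phat c r > t then μ c * (phat c r - p c r) else 0) = ∑ c, μ c * G c := by
        apply Finset.sum_congr rfl
        intro c _
        rw [hG]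
        simp only
        rw [Finset.mul_sum]
        apply Finset.sum_congr rfl
        intro r _
        by_cases hA : phat c r > t <;> simp [hA]
      rw [show δ = |∑ c, ∑ r ∈ Rset c,
          if phat c r > t then μ c * (phat c r - p c r) else 0| from rfl, this]
    rw [hδeq]
    exact le_abs_self _
  -- combine
  have hmain : 2 * erriv ≤ err + (maxV : ℝ) / (minE : ℝ) + ∑ c, μ c * G c := by
    rw [herriv2]
    have h1 : ∑ c, μ c * L c
        ≤ ∑ c, μ c * ((∑ r ∈ Eset c, phat c r) + (maxV : ℝ) / (minE : ℝ) + G c) := by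
      apply Finset.sum_le_sum
      intro c _
      exact mul_le_mul_of_nonneg_left (key c) (hμ0 c)
    have h2 : ∑ c, μ c * ((∑ r ∈ Eset c, phat c r) + (maxV : ℝ) / (minE : ℝ) + G c)
        = err + (maxV : ℝ) / (minE : ℝ) + ∑ c, μ c * G c := by
      have herr : err = ∑ c, μ c * ∑ r ∈ Eset c, phat c r := rfl
      rw [herr]
      simp only [mul_add]
      rw [Finset.sum_add_distrib, Finset.sum_add_distrib, ← Finset.sum_mul, hμ1, one_mul]
    linarith
  linarith
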